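/- Let ξ ∈ C²(S¹;ℝ^d) be a solution of the stationary equation ∂_s(σ ∂_s ξ) + ξ = 0 with |∂_s ξ| ≡ 1, where σ ∈ C²(S¹) satisfies ∂_{ss}σ − σ|∂_{ss}ξ|² = −1 and σ > 0. Then ξ is a plane curve (ξ, ∂_s ξ, ∂_{ss}ξ all lie in a fixed 2-plane), its curvature k satisfies σ² k = const, and k(s) > 0 for all s ∈ S¹. -/

import Mathlib

open Real MeasureTheory intervalIntegral
noncomputable section
local notation "⟪" x ", " y "⟫" => @inner ℝ _ _ x y


lemma aux_periodic_bound {h : ℝ → ℝ} (hc : Continuous h) (hp : Function.Periodic h 1) :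
    ∃ M : ℝ, 0 ≤ M ∧ ∀ t, |h t| ≤ M := by
  obtain ⟨M, hM⟩ := (isCompact_Icc (a := (0:ℝ)) (b := 1)).exists_bound_of_continuousOn
    hc.continuousOn
  refine ⟨max M 0, le_max_right _ _, fun t => ?_⟩
  have h1 : h (Int.fract t) = h t := by
    have h0 := hp.sub_int_mul_eq (x := t) ⌊t⌋
    rw [mul_one] at h0
    rw [Int.fract]
    exact h0
  have h2 : Int.fract t ∈ Set.Icc (0:ℝ) 1 :=
    ⟨Int.fract_nonneg t, (Int.fract_lt_one t).le⟩
  calc |h t| = ‖h (Int.fract t)‖ := by rw [h1]; rfl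
    _ ≤ M := hM _ h2
    _ ≤ max M 0 := le_max_left _ _

set_option maxHeartbeats 1600000 in
/-- A stationary solution of the normalized flow is a plane curve with everywhere
positive curvature, and `σ² k` is constant along the curve. -/
theorem stmt13 (d : ℕ)
    (ξ : ℝ → EuclideanSpace ℝ (Fin d)) (σ : ℝ → ℝ)
    (hξ : ContDiff ℝ 2 ξ) (hσ : ContDiff ℝ 2 σ)
    (hperξ : Function.Periodic ξ 1) (hperσ : Function.Periodic σ 1)
    (hσpos : ∀ s, 0 < σ s)
    (hspeed : ∀ s, ‖deriv ξ s‖ = 1)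
    (hstat : ∀ s, deriv (fun r => σ r • deriv ξ r) s + ξ s = 0)
    (hmult : ∀ s, deriv (deriv σ) s - σ s * ‖deriv (deriv ξ) s‖ ^ 2 = -1) :
    (∃ P : Submodule ℝ (EuclideanSpace ℝ (Fin d)), Module.finrank ℝ P ≤ 2 ∧
      ∀ s, ξ s ∈ P ∧ deriv ξ s ∈ P ∧ deriv (deriv ξ) s ∈ P) ∧
    (∃ c : ℝ, ∀ s, σ s ^ 2 * ‖deriv (deriv ξ) s‖ = c) ∧
    (∀ s, 0 < ‖deriv (deriv ξ) s‖) := by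
  have hξ2 : ContDiff ℝ ((1:ℕ)+1) ξ := by exact_mod_cast hξ
  have hσ2 : ContDiff ℝ ((1:ℕ)+1) σ := by exact_mod_cast hσ
  have hξ1 : Differentiable ℝ ξ := hξ.differentiable two_ne_zero
  have hσ1 : Differentiable ℝ σ := hσ.differentiable two_ne_zero
  have hξ'C : ContDiff ℝ 1 (deriv ξ) := (contDiff_succ_iff_deriv.mp hξ2).2.2
  have hσ'C : ContDiff ℝ 1 (deriv σ) := (contDiff_succ_iff_deriv.mp hσ2).2.2
  have hξ'1 : Differentiable ℝ (deriv ξ) := hξ'C.differentiable one_ne_zero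
  have hσ'1 : Differentiable ℝ (deriv σ) := hσ'C.differentiable one_ne_zero
  -- main pointwise equation
  have heq : ∀ s, deriv σ s • deriv ξ s + σ s • deriv (deriv ξ) s + ξ s = 0 := by
    intro s
    have h0 := hstat s
    rw [deriv_fun_smul (hσ1 s) (hξ'1 s)] at h0
    linear_combination (norm := module) h0
  -- xi'' formula
  have hξ''eq : ∀ s, deriv (deriv ξ) s
      = (σ s)⁻¹ • (-ξ s - deriv σ s • deriv ξ s) := by
    intro s
    have hne := (hσpos s).ne'
    have h1 : σ s • deriv (deriv ξ) s = -ξ s - deriv σ s • deriv ξ s := by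
      linear_combination (norm := module) heq s
    rw [← h1, smul_smul, inv_mul_cancel₀ hne, one_smul]
  -- orthogonality
  have hortho : ∀ s, ⟪deriv ξ s, deriv (deriv ξ) s⟫ = 0 := by
    intro s
    have hD : HasDerivAt (fun r => ⟪deriv ξ r, deriv ξ r⟫)
        (⟪deriv ξ s, deriv (deriv ξ) s⟫ + ⟪deriv (deriv ξ) s, deriv ξ s⟫) s :=
      HasDerivAt.inner ℝ (hξ'1 s).hasDerivAt (hξ'1 s).hasDerivAt
    have hconst : (fun r => ⟪deriv ξ r, deriv ξ r⟫) = fun _ => (1:ℝ) := by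
      funext r
      rw [real_inner_self_eq_norm_sq, hspeed r]; norm_num
    rw [hconst] at hD
    have h0 := (hasDerivAt_const s (1:ℝ)).unique hD
    rw [real_inner_comm (deriv (deriv ξ) s)] at h0
    rw [real_inner_comm]; linarith
  -- inner products facts
  have hipx : ∀ s, ⟪ξ s, deriv (deriv ξ) s⟫ = -(σ s * ⟪deriv (deriv ξ) s, deriv (deriv ξ) s⟫) := by
    intro s
    have h0 := congrArg (fun v => ⟪v, deriv (deriv ξ) s⟫) (heq s)
    simp only [inner_add_left, real_inner_smul_left, inner_zero_left] at h0
    rw [hortho s] at h0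
    linarith
  -- derivative of A
  set ξ' := deriv ξ with hξ'def
  set ξ'' := deriv (deriv ξ) with hξ''def
  set σ' := deriv σ with hσ'def
  set σ'' := deriv (deriv σ) with hσ''def
  have hA : ∀ s, HasDerivAt (fun r => -ξ r - σ' r • ξ' r)
      (-ξ' s - (σ' s • ξ'' s + σ'' s • ξ' s)) s := by
    intro s
    exact ((hξ1 s).hasDerivAt.neg).sub (((hσ'1 s).hasDerivAt).smul (hξ'1 s).hasDerivAt)
  have hξ''hd : ∀ s, HasDerivAt ξ''
      ((σ s)⁻¹ • (-ξ' s - (σ' s • ξ'' s + σ'' s • ξ' s))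
        + (-(σ' s) / (σ s)^2) • (-ξ s - σ' s • ξ' s)) s := by
    intro s
    have hinv : HasDerivAt (fun r => (σ r)⁻¹) (-(σ' s) / (σ s)^2) s :=
      ((hσ1 s).hasDerivAt).inv (hσpos s).ne'
    have h := hinv.fun_smul (hA s)
    rw [show (fun r => (σ r)⁻¹ • (-ξ r - σ' r • ξ' r)) = ξ'' from
      (funext fun r => (hξ''eq r).symm)] at h
    exact h
  -- F is constant
  set F : ℝ → ℝ := fun s => σ s ^ 4 * ⟪ξ'' s, ξ'' s⟫ with hFdef
  have hF0 : ∀ s, HasDerivAt F 0 s := by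
    intro s
    have hpow : HasDerivAt (fun r => σ r ^ 4) ((4:ℕ) * σ s ^ 3 * σ' s) s :=
      (hσ1 s).hasDerivAt.pow 4
    have hin : HasDerivAt (fun r => ⟪ξ'' r, ξ'' r⟫)
        (⟪ξ'' s, ((σ s)⁻¹ • (-ξ' s - (σ' s • ξ'' s + σ'' s • ξ' s))
          + (-(σ' s) / (σ s)^2) • (-ξ s - σ' s • ξ' s))⟫
         + ⟪((σ s)⁻¹ • (-ξ' s - (σ' s • ξ'' s + σ'' s • ξ' s))
          + (-(σ' s) / (σ s)^2) • (-ξ s - σ' s • ξ' s)), ξ'' s⟫) s :=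
      HasDerivAt.inner ℝ (hξ''hd s) (hξ''hd s)
    have hmul := hpow.fun_mul hin
    have hval : σ s ^ 4 * (⟪ξ'' s, ((σ s)⁻¹ • (-ξ' s - (σ' s • ξ'' s + σ'' s • ξ' s))
          + (-(σ' s) / (σ s)^2) • (-ξ s - σ' s • ξ' s))⟫
         + ⟪((σ s)⁻¹ • (-ξ' s - (σ' s • ξ'' s + σ'' s • ξ' s))
          + (-(σ' s) / (σ s)^2) • (-ξ s - σ' s • ξ' s)), ξ'' s⟫)
         + (4:ℕ) * σ s ^ 3 * σ' s * ⟪ξ'' s, ξ'' s⟫ = 0 := by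
      have h1 := hortho s
      have h2 := hipx s
      have hne := (hσpos s).ne'
      simp only [inner_add_left, inner_add_right, inner_sub_left, inner_sub_right,
        inner_neg_left, inner_neg_right, real_inner_smul_left, real_inner_smul_right,
        real_inner_comm (ξ s) (ξ'' s), real_inner_comm (ξ' s) (ξ'' s)] at *
      rw [h1, h2]
      field_simp
      ring
    rw [hFdef]
    exact hmul.congr_deriv ((add_comm _ _).trans hval)
  have hFconst : ∀ s, F s = F 0 := by
    intro s
    exact is_const_of_deriv_eq_zero (fun t => (hF0 t).differentiableAt)
      (fun t => (hF0 t).deriv) s 0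
  -- sigma^2 k = c
  have hctarget : ∀ s, σ s ^ 2 * ‖ξ'' s‖ = Real.sqrt (F 0) := by
    intro s
    have h1 : (σ s ^ 2 * ‖ξ'' s‖) ^ 2 = F s := by
      have hFs : F s = σ s ^ 4 * ⟪ξ'' s, ξ'' s⟫ := rfl
      rw [hFs, real_inner_self_eq_norm_sq]
      ring
    rw [← hFconst s, ← h1, Real.sqrt_sq (by positivity)]
  -- positivity
  have hcne : Real.sqrt (F 0) ≠ 0 := by
    intro hc0
    have hk0 : ∀ s, ξ'' s = 0 := by
      intro s
      have h1 := hctarget s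
      rw [hc0] at h1
      have h2 : ‖ξ'' s‖ = 0 := by
        rcases mul_eq_zero.mp h1 with h | h
        · exact absurd h (by have := hσpos s; positivity)
        · exact h
      exact norm_eq_zero.mp h2
    have hconstξ' : ∀ s, ξ' s = ξ' 0 := by
      intro s
      exact is_const_of_deriv_eq_zero hξ'1 (fun t => hk0 t) s 0
    have hlin : ∀ s : ℝ, ξ s - s • ξ' 0 = ξ 0 - (0:ℝ) • ξ' 0 := by
      intro s
      refine is_const_of_deriv_eq_zero (f := fun r : ℝ => ξ r - r • ξ' 0)
        (fun t => ?_) (fun t => ?_) s 0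
      · exact ((hξ1 t).sub ((differentiable_id.smul_const (ξ' 0)) t))
      · have hd : HasDerivAt (fun r : ℝ => ξ r - r • ξ' 0) (ξ' t - ξ' 0) t := by
          have h1 : HasDerivAt (fun r : ℝ => r • ξ' 0) ((1:ℝ) • ξ' 0) t :=
            (hasDerivAt_id t).smul_const (ξ' 0)
        
          simpa using (hξ1 t).hasDerivAt.fun_sub h1
        rw [hd.deriv, hconstξ' t, sub_self]
    have h1 := hlin 1
    have h2 : ξ 1 = ξ 0 := by
      have := hperξ 0
      simpa using this
    rw [h2] at h1
    simp at h1
    have := hspeed 0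
    rw [h1] at this
    simp at this
  have hpos : ∀ s, 0 < ‖ξ'' s‖ := by
    intro s
    rcases (norm_nonneg (ξ'' s)).lt_or_eq with h | h
    · exact h
    · exfalso
      apply hcne
      rw [← hctarget s, ← h, mul_zero]
  -- periodicity of σ'
  have hperσ' : Function.Periodic σ' 1 := by
    intro x
    have hfun : (fun y => σ (y + 1)) = σ := funext fun y => hperσ y
    have h0 : deriv (fun y => σ (y + 1)) x = deriv σ (x + 1) :=
      deriv_comp_add_const σ 1 x
    rw [hfun] at h0
    rw [hσ'def]
    exact h0.symm
  -- bound on coefficients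
  obtain ⟨M, hM0, hM⟩ := aux_periodic_bound
    (h := fun t => |(σ t)⁻¹| + |σ' t * (σ t)⁻¹|)
    (((hσ.continuous.inv₀ fun t => (hσpos t).ne').abs).add
      ((hσ'C.continuous.mul (hσ.continuous.inv₀ fun t => (hσpos t).ne')).abs))
    (fun x => by simp only [hperσ x, hperσ' x])
  classical
  -- the plane
  set P : Submodule ℝ (EuclideanSpace ℝ (Fin d)) :=
    Submodule.span ℝ {ξ 0, ξ' 0} with hPdef
  have hrank : Module.finrank ℝ P ≤ 2 := by
    have h1 := finrank_span_le_card (R := ℝ) ({ξ 0, ξ' 0} : Set (EuclideanSpace ℝ (Fin d)))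
    refine h1.trans ?_
    simp only [Set.toFinset_insert, Set.toFinset_singleton]
    exact (Finset.card_insert_le _ _).trans (by simp)
  set prj : EuclideanSpace ℝ (Fin d) →L[ℝ] EuclideanSpace ℝ (Fin d) :=
    Pᗮ.subtypeL.comp (Submodule.orthogonalProjection Pᗮ) with hprjdef
  have hprjapp : ∀ x, prj x = (Submodule.orthogonalProjection Pᗮ x : EuclideanSpace ℝ (Fin d)) :=
    fun x => rfl
  have hmemiff : ∀ x, prj x = 0 ↔ x ∈ P := by
    intro x
    rw [hprjapp, Submodule.coe_eq_zero, Submodule.orthogonalProjection_eq_zero_iff,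
      Submodule.orthogonal_orthogonal]
  -- the ODE
  set v : ℝ → (EuclideanSpace ℝ (Fin d) × EuclideanSpace ℝ (Fin d)) →
      (EuclideanSpace ℝ (Fin d) × EuclideanSpace ℝ (Fin d)) :=
    fun t p => (p.2, (-(σ t)⁻¹) • p.1 + (-(σ' t * (σ t)⁻¹)) • p.2) with hvdef
  have hlip : ∀ t, LipschitzWith (Real.toNNReal (1 + M)) (v t) := by
    intro t
    apply LipschitzWith.of_dist_le_mul
    intro p q
    have hcoe : (Real.toNNReal (1 + M) : ℝ) = 1 + M :=
      Real.coe_toNNReal _ (by linarith)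
    have hvp : v t p = (p.2, (-(σ t)⁻¹) • p.1 + (-(σ' t * (σ t)⁻¹)) • p.2) := by
      simp only [hvdef]
    have hvq : v t q = (q.2, (-(σ t)⁻¹) • q.1 + (-(σ' t * (σ t)⁻¹)) • q.2) := by
      simp only [hvdef]
    rw [hcoe, hvp, hvq, Prod.dist_eq]
    dsimp only
    have hd1 : dist p.1 q.1 ≤ dist p q := by rw [Prod.dist_eq]; exact le_max_left _ _
    have hd2 : dist p.2 q.2 ≤ dist p q := by rw [Prod.dist_eq]; exact le_max_right _ _
    have hMt : |(σ t)⁻¹| + |σ' t * (σ t)⁻¹| ≤ M := (le_abs_self _).trans (hM t)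
    have ha1 : (0:ℝ) ≤ |(σ t)⁻¹| := abs_nonneg _
    have ha2 : (0:ℝ) ≤ |σ' t * (σ t)⁻¹| := abs_nonneg _
    have hdnn : (0:ℝ) ≤ dist p q := dist_nonneg
    apply max_le
    · nlinarith [mul_nonneg hM0 hdnn]
    · have h2 : ((-(σ t)⁻¹) • p.1 + (-(σ' t * (σ t)⁻¹)) • p.2)
          - ((-(σ t)⁻¹) • q.1 + (-(σ' t * (σ t)⁻¹)) • q.2)
          = (-(σ t)⁻¹) • (p.1 - q.1) + (-(σ' t * (σ t)⁻¹)) • (p.2 - q.2) := by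
        module
      rw [dist_eq_norm, h2]
      have hb : ‖(-(σ t)⁻¹) • (p.1 - q.1) + (-(σ' t * (σ t)⁻¹)) • (p.2 - q.2)‖
          ≤ |(σ t)⁻¹| * dist p.1 q.1 + |σ' t * (σ t)⁻¹| * dist p.2 q.2 := by
        refine (norm_add_le _ _).trans ?_
        rw [norm_smul, norm_smul, dist_eq_norm, dist_eq_norm]
        simp [Real.norm_eq_abs, abs_mul, abs_inv]
      refine hb.trans ?_
      have h1' := mul_le_mul_of_nonneg_left hd1 ha1
      have h2' := mul_le_mul_of_nonneg_left hd2 ha2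
      have h3' := mul_le_mul_of_nonneg_right hMt hdnn
      nlinarith
  set f : ℝ → EuclideanSpace ℝ (Fin d) × EuclideanSpace ℝ (Fin d) :=
    fun t => (prj (ξ t), prj (ξ' t)) with hfdef
  have hfd : ∀ t, HasDerivAt f (v t (f t)) t := by
    intro t
    have h1 : HasDerivAt (fun r => prj (ξ r)) (prj (ξ' t)) t :=
      prj.hasFDerivAt.comp_hasDerivAt t (hξ1 t).hasDerivAt
    have h2 : HasDerivAt (fun r => prj (ξ' r)) (prj (ξ'' t)) t :=
      prj.hasFDerivAt.comp_hasDerivAt t (hξ'1 t).hasDerivAt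
    have h3 : prj (ξ'' t) = (-(σ t)⁻¹) • prj (ξ t) + (-(σ' t * (σ t)⁻¹)) • prj (ξ' t) := by
      rw [hξ''eq t]
      simp only [_root_.map_smul, map_sub, map_neg]
      module
    have h4 : v t (f t) = (prj (ξ' t), prj (ξ'' t)) := by
      simp only [hvdef, hfdef]
      exact Prod.ext rfl h3.symm
    rw [h4]
    exact h1.prodMk h2
  have hf0 : f 0 = 0 := by
    have hm1 : ξ 0 ∈ P := Submodule.subset_span (by simp)
    have hm2 : ξ' 0 ∈ P := Submodule.subset_span (by simp)
    have e1 : prj (ξ 0) = 0 := (hmemiff _).mpr hm1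
    have e2 : prj (ξ' 0) = 0 := (hmemiff _).mpr hm2
    simp only [hfdef, e1, e2]
    rfl
  have hv0 : ∀ r : ℝ, v r 0 = 0 := by
    intro r
    simp only [hvdef, Prod.snd_zero, Prod.fst_zero, smul_zero, add_zero]
    rfl
  have hkey : ∀ t, f t = 0 := by
    intro t
    have ha : (0:ℝ) ∈ Set.Ioo (-(|t|+1)) (|t|+1) := by
      constructor
      · have := abs_nonneg t; linarith
      · have := abs_nonneg t; linarith
    have huniq := ODE_solution_unique_of_mem_Icc
      (v := v) (s := fun _ => Set.univ) (K := Real.toNNReal (1 + M))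
      (fun r _ => (hlip r).lipschitzOnWith)
      ha
      (fun r _ => (hfd r).continuousAt.continuousWithinAt)
      (fun r _ => hfd r)
      (fun r _ => trivial)
      continuousOn_const
      (fun r _ => by
        rw [hv0 r]
        exact hasDerivAt_const r 0)
      (fun r _ => trivial)
      hf0
    have hts : t ∈ Set.Icc (-(|t|+1)) (|t|+1) := by
      constructor
      · have := neg_abs_le t; linarith
      · have := le_abs_self t; linarith
    exact huniq hts
  have hmemP : ∀ s, ξ s ∈ P ∧ ξ' s ∈ P ∧ ξ'' s ∈ P := by
    intro s
    have h := hkey s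
    have h1 : prj (ξ s) = 0 := congrArg Prod.fst h
    have h2 : prj (ξ' s) = 0 := congrArg Prod.snd h
    have m1 := (hmemiff _).mp h1
    have m2 := (hmemiff _).mp h2
    refine ⟨m1, m2, ?_⟩
    rw [hξ''eq s]
    exact Submodule.smul_mem _ _
      (Submodule.sub_mem _ (Submodule.neg_mem _ m1) (Submodule.smul_mem _ _ m2))
  exact ⟨⟨P, hrank, hmemP⟩, ⟨Real.sqrt (F 0), hctarget⟩, hpos⟩
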